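/- arXiv:2307.10748 — 4 statements merged into one kernel-verified Lean document; each statement's English description precedes it below -/
import Mathlib

section
/- Let a, b > 0 and φ, ψ ∈ ℝ. Then the operator norm of Ω(a,ψ) · Ω(b,φ)⁻¹ is at most max{a/b, b/a}·|cos(φ-ψ)| + max{ab, 1/(ab)}·|sin(φ-ψ)|. -/
open Matrix


/-- The operator norm of a 2×2 real matrix, acting on Euclidean ℝ². -/
noncomputable def opNorm2 (M : Matrix (Fin 2) (Fin 2) ℝ) : ℝ :=
  ‖(Matrix.toEuclideanLin M).toContinuousLinearMap‖

/-- Ω(a,ψ) = diag(a, a⁻¹) · R(-ψ). -/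
noncomputable def OmegaMat (a ψ : ℝ) : Matrix (Fin 2) (Fin 2) ℝ :=
  !![a, 0; 0, a⁻¹] * !![Real.cos ψ, -Real.sin ψ; Real.sin ψ, Real.cos ψ]

lemma opNorm2_le (M : Matrix (Fin 2) (Fin 2) ℝ) (C : ℝ) (hC : 0 ≤ C)
    (h : ∀ x : EuclideanSpace ℝ (Fin 2), ‖Matrix.toEuclideanLin M x‖ ≤ C * ‖x‖) :
    opNorm2 M ≤ C :=
  ContinuousLinearMap.opNorm_le_bound _ hC h

lemma norm_euclidean (y : EuclideanSpace ℝ (Fin 2)) :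
    ‖y‖ = Real.sqrt ((y 0)^2 + (y 1)^2) := by
  rw [EuclideanSpace.norm_eq]
  simp [Fin.sum_univ_two, Real.norm_eq_abs, sq_abs]

lemma opNorm2_diag_le (c d : ℝ) : opNorm2 !![c, 0; 0, d] ≤ max |c| |d| := by
  apply opNorm2_le _ _ (le_trans (abs_nonneg c) (le_max_left _ _))
  intro x
  rw [Matrix.toEuclideanLin_apply, norm_euclidean, norm_euclidean]
  have h0 : ((WithLp.equiv 2 (Fin 2 → ℝ)).symm
      (!![c, 0; 0, d] *ᵥ (WithLp.equiv 2 (Fin 2 → ℝ)) x) : EuclideanSpace ℝ (Fin 2)) 0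
      = c * x 0 := by
    simp [Matrix.mulVec, dotProduct, Fin.sum_univ_two, WithLp.equiv]
  have h1 : ((WithLp.equiv 2 (Fin 2 → ℝ)).symm
      (!![c, 0; 0, d] *ᵥ (WithLp.equiv 2 (Fin 2 → ℝ)) x) : EuclideanSpace ℝ (Fin 2)) 1
      = d * x 1 := by
    simp [Matrix.mulVec, dotProduct, Fin.sum_univ_two, WithLp.equiv]
  erw [h0, h1,
    ← Real.sqrt_sq (le_trans (abs_nonneg c) (le_max_left _ _)), ← Real.sqrt_mul (sq_nonneg _)]
  apply Real.sqrt_le_sqrt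
  have hc : c^2 ≤ (max |c| |d|)^2 := by
    rw [← sq_abs c]; exact pow_le_pow_left₀ (abs_nonneg _) (le_max_left _ _) 2
  have hd : d^2 ≤ (max |c| |d|)^2 := by
    rw [← sq_abs d]; exact pow_le_pow_left₀ (abs_nonneg _) (le_max_right _ _) 2
  nlinarith [sq_nonneg (x 0), sq_nonneg (x 1)]

lemma opNorm2_antidiag_le (c d : ℝ) : opNorm2 !![0, c; d, 0] ≤ max |c| |d| := by
  apply opNorm2_le _ _ (le_trans (abs_nonneg c) (le_max_left _ _))
  intro x
  rw [Matrix.toEuclideanLin_apply, norm_euclidean, norm_euclidean]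
  have h0 : ((WithLp.equiv 2 (Fin 2 → ℝ)).symm
      (!![0, c; d, 0] *ᵥ (WithLp.equiv 2 (Fin 2 → ℝ)) x) : EuclideanSpace ℝ (Fin 2)) 0
      = c * x 1 := by
    simp [Matrix.mulVec, dotProduct, Fin.sum_univ_two, WithLp.equiv]
  have h1 : ((WithLp.equiv 2 (Fin 2 → ℝ)).symm
      (!![0, c; d, 0] *ᵥ (WithLp.equiv 2 (Fin 2 → ℝ)) x) : EuclideanSpace ℝ (Fin 2)) 1
      = d * x 0 := by
    simp [Matrix.mulVec, dotProduct, Fin.sum_univ_two, WithLp.equiv]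
  erw [h0, h1,
    ← Real.sqrt_sq (le_trans (abs_nonneg c) (le_max_left _ _)), ← Real.sqrt_mul (sq_nonneg _)]
  apply Real.sqrt_le_sqrt
  have hc : c^2 ≤ (max |c| |d|)^2 := by
    rw [← sq_abs c]; exact pow_le_pow_left₀ (abs_nonneg _) (le_max_left _ _) 2
  have hd : d^2 ≤ (max |c| |d|)^2 := by
    rw [← sq_abs d]; exact pow_le_pow_left₀ (abs_nonneg _) (le_max_right _ _) 2
  nlinarith [sq_nonneg (x 0), sq_nonneg (x 1)]

lemma opNorm2_add_le (M N : Matrix (Fin 2) (Fin 2) ℝ) :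
    opNorm2 (M + N) ≤ opNorm2 M + opNorm2 N := by
  unfold opNorm2
  rw [map_add, map_add]
  exact norm_add_le _ _

lemma opNorm2_smul (r : ℝ) (M : Matrix (Fin 2) (Fin 2) ℝ) :
    opNorm2 (r • M) = |r| * opNorm2 M := by
  unfold opNorm2
  rw [_root_.map_smul, _root_.map_smul]
  rw [show (r • LinearMap.toContinuousLinearMap (Matrix.toEuclideanLin M) :
      EuclideanSpace ℝ (Fin 2) →L[ℝ] EuclideanSpace ℝ (Fin 2)) =
      r • LinearMap.toContinuousLinearMap (Matrix.toEuclideanLin M) from rfl]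
  exact (norm_smul r (LinearMap.toContinuousLinearMap
    (Matrix.toEuclideanLin M))).trans (by rw [Real.norm_eq_abs])

theorem stmt2 (a b : ℝ) (ha : 0 < a) (hb : 0 < b) (φ ψ : ℝ) :
    opNorm2 (OmegaMat a ψ * (OmegaMat b φ)⁻¹) ≤
      max (a / b) (b / a) * |Real.cos (φ - ψ)| +
        max (a * b) (1 / (a * b)) * |Real.sin (φ - ψ)| := by
  set θ := φ - ψ with hθ
  have hb' : b ≠ 0 := hb.ne'
  have ha' : a ≠ 0 := ha.ne'
  have hinv : (OmegaMat b φ)⁻¹ =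
      !![Real.cos φ / b, b * Real.sin φ; -Real.sin φ / b, b * Real.cos φ] := by
    apply Matrix.inv_eq_right_inv
    unfold OmegaMat
    rw [Matrix.mul_assoc]
    ext i j
    fin_cases i <;> fin_cases j <;>
      simp [Matrix.mul_apply, Fin.sum_univ_two]
    · field_simp
      nlinarith [Real.sin_sq_add_cos_sq φ]
    · right; ring
    · right; ring
    · field_simp
      nlinarith [Real.sin_sq_add_cos_sq φ]
  have hM : OmegaMat a ψ * (OmegaMat b φ)⁻¹ =
      Real.cos θ • !![a / b, 0; 0, b / a] +
        Real.sin θ • !![0, a * b; -(1 / (a * b)), 0] := by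
    rw [hinv]
    unfold OmegaMat
    have hc : Real.cos θ = Real.cos φ * Real.cos ψ + Real.sin φ * Real.sin ψ := by
      rw [hθ, Real.cos_sub]
    have hs : Real.sin θ = Real.sin φ * Real.cos ψ - Real.cos φ * Real.sin ψ := by
      rw [hθ, Real.sin_sub]
    ext i j
    fin_cases i <;> fin_cases j <;>
      simp [Matrix.mul_apply, Fin.sum_univ_two, hc, hs] <;>
      first
        | ring
        | (field_simp; ring)
  rw [hM]
  calc opNorm2 _ ≤ opNorm2 (Real.cos θ • !![a / b, 0; 0, b / a]) +
        opNorm2 (Real.sin θ • !![0, a * b; -(1 / (a * b)), 0]) := opNorm2_add_le _ _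
    _ ≤ max (a / b) (b / a) * |Real.cos θ| + max (a * b) (1 / (a * b)) * |Real.sin θ| := by
        rw [opNorm2_smul, opNorm2_smul]
        have h1 : opNorm2 !![a / b, 0; 0, b / a] ≤ max (a / b) (b / a) := by
          have := opNorm2_diag_le (a / b) (b / a)
          rwa [abs_of_pos (div_pos ha hb), abs_of_pos (div_pos hb ha)] at this
        have h2 : opNorm2 !![0, a * b; -(1 / (a * b)), 0] ≤ max (a * b) (1 / (a * b)) := by
          have := opNorm2_antidiag_le (a * b) (-(1 / (a * b)))
          rwa [abs_of_pos (mul_pos ha hb), abs_neg,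
            abs_of_pos (by positivity : (0:ℝ) < 1 / (a * b))] at this
        rw [mul_comm (max (a / b) (b / a)) _, mul_comm (max (a * b) (1 / (a * b))) _]
        exact add_le_add (mul_le_mul_of_nonneg_left h1 (abs_nonneg _))
          (mul_le_mul_of_nonneg_left h2 (abs_nonneg _))
end

section
/- Let W_j(z) = I + z·l_j·ξ_{φ_j}ξ_{φ_j}ᵀ·J for j = 1,…,N, where l_j > 0, φ_j ∈ ℝ, z ∈ ℂ. For any choice of a_j ∈ (0,1], j = 1,…,N, the norm of the product W_1(z)·…·W_N(z) is at most (a_1 a_N)⁻¹ · ∏_{j=1}^N (1 + |z| l_j a_j²) · ∏_{j=1}^{N-1} ( max{a_j/a_{j+1}, a_{j+1}/a_j}·|cos(φ_j − φ_{j+1})| + |sin(φ_j − φ_{j+1})|/(a_j a_{j+1}) ). -/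
/-- The operator norm of a 2×2 complex matrix, acting on Euclidean ℂ². -/
noncomputable def opNormC (M : Matrix (Fin 2) (Fin 2) ℂ) : ℝ :=
  ‖(Matrix.toEuclideanLin M).toContinuousLinearMap‖

/-- W_j(z) = I + z·l_j·ξ_{φ_j}ξ_{φ_j}ᵀ·J (as a complex 2×2 matrix). -/
noncomputable def Wmat (l : ℕ → ℝ) (φ : ℕ → ℝ) (z : ℂ) (j : ℕ) :
    Matrix (Fin 2) (Fin 2) ℂ :=
  1 + (z * (l j : ℂ)) •
    (!![(Real.cos (φ j) : ℂ) * (Real.cos (φ j) : ℂ),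
        (Real.cos (φ j) : ℂ) * (Real.sin (φ j) : ℂ);
        (Real.sin (φ j) : ℂ) * (Real.cos (φ j) : ℂ),
        (Real.sin (φ j) : ℂ) * (Real.sin (φ j) : ℂ)] *
      !![0, -1; 1, 0])

open scoped Matrix.Norms.L2Operator
open Matrix

lemma norm_cols_le (M : Matrix (Fin 2) (Fin 2) ℂ) (p q r s C : ℝ)
    (hM : M = !![(p:ℂ),(q:ℂ);(r:ℂ),(s:ℂ)]) (hC : 0 ≤ C)
    (h1 : p^2 + r^2 ≤ C^2) (h2 : q^2 + s^2 ≤ C^2) (h3 : p*q + r*s = 0) :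
    ‖M‖ ≤ C := by
  subst hM
  rw [Matrix.l2_opNorm_def]
  refine ContinuousLinearMap.opNorm_le_bound _ hC (fun v => ?_)
  simp only [LinearEquiv.trans_apply, LinearMap.coe_toContinuousLinearMap']
  set x := v 0 with hx
  set y := v 1 with hy
  have hv : ‖v‖ = Real.sqrt (‖x‖^2 + ‖y‖^2) := by
    rw [EuclideanSpace.norm_eq]
    simp [Fin.sum_univ_two, hx, hy]
  have happ : (Matrix.toEuclideanLin !![(p:ℂ),(q:ℂ);(r:ℂ),(s:ℂ)]) v =
      (WithLp.equiv 2 (Fin 2 → ℂ)).symm ![(p:ℂ)*x + q*y, (r:ℂ)*x + s*y] := by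
    rw [Matrix.toEuclideanLin_apply]
    congr 1
    ext i
    fin_cases i <;>
      simp [Matrix.mulVec, dotProduct, Fin.sum_univ_two, hx, hy]
  rw [happ, hv]
  have hnorm : ‖(WithLp.equiv 2 (Fin 2 → ℂ)).symm ![(p:ℂ)*x + q*y, (r:ℂ)*x + s*y]‖
      = Real.sqrt (‖(p:ℂ)*x + q*y‖^2 + ‖(r:ℂ)*x + s*y‖^2) := by
    rw [EuclideanSpace.norm_eq]
    simp [Fin.sum_univ_two]
  rw [hnorm]
  have key : ‖(p:ℂ)*x + q*y‖^2 + ‖(r:ℂ)*x + s*y‖^2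
      ≤ C^2 * (‖x‖^2 + ‖y‖^2) := by
    simp only [Complex.sq_norm, Complex.normSq_apply, Complex.add_re, Complex.add_im,
      Complex.mul_re, Complex.mul_im, Complex.ofReal_re, Complex.ofReal_im]
    have h3' : (p*q + r*s)*(x.re*y.re + x.im*y.im) = 0 := by rw [h3]; ring
    nlinarith [mul_nonneg (sub_nonneg.2 h1) (add_nonneg (sq_nonneg x.re) (sq_nonneg x.im)),
      mul_nonneg (sub_nonneg.2 h2) (add_nonneg (sq_nonneg y.re) (sq_nonneg y.im)), h3']
  calc Real.sqrt (‖(p:ℂ)*x + q*y‖^2 + ‖(r:ℂ)*x + s*y‖^2)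
      ≤ Real.sqrt (C^2 * (‖x‖^2 + ‖y‖^2)) := Real.sqrt_le_sqrt key
    _ = C * Real.sqrt (‖x‖^2 + ‖y‖^2) := by
        rw [Real.sqrt_mul (sq_nonneg C), Real.sqrt_sq hC]

noncomputable def RotM (θ : ℝ) : Matrix (Fin 2) (Fin 2) ℂ :=
  !![(Real.cos θ : ℂ), -(Real.sin θ : ℂ); (Real.sin θ : ℂ), (Real.cos θ : ℂ)]

noncomputable def Dg (t : ℝ) : Matrix (Fin 2) (Fin 2) ℂ :=
  !![(t:ℂ), 0; 0, ((t⁻¹ : ℝ) : ℂ)]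

def Nm : Matrix (Fin 2) (Fin 2) ℂ := !![0, -1; 0, 0]


lemma rot_mul_rot (α β : ℝ) : RotM α * RotM β = RotM (α + β) := by
  ext i j
  fin_cases i <;> fin_cases j <;>
    simp [RotM, Matrix.mul_apply, Fin.sum_univ_two, Real.cos_add, Real.sin_add] <;>
    push_cast <;> ring

lemma rot_zero : RotM 0 = 1 := by
  ext i j
  fin_cases i <;> fin_cases j <;> simp [RotM, Matrix.one_apply]

lemma rot_conj_N (θ : ℝ) :
    RotM θ * Nm * RotM (-θ) =
      !![(Real.cos θ : ℂ) * (Real.cos θ : ℂ),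
        (Real.cos θ : ℂ) * (Real.sin θ : ℂ);
        (Real.sin θ : ℂ) * (Real.cos θ : ℂ),
        (Real.sin θ : ℂ) * (Real.sin θ : ℂ)] * !![0, -1; 1, 0] := by
  ext i j
  fin_cases i <;> fin_cases j <;>
    simp [RotM, Nm, Matrix.mul_apply, Fin.sum_univ_two] <;> push_cast <;> ring

lemma Wmat_eq (l φ : ℕ → ℝ) (z : ℂ) (j : ℕ) :
    Wmat l φ z j = RotM (φ j) * (1 + (z * (l j : ℂ)) • Nm) * RotM (-(φ j)) := by
  rw [Matrix.mul_add, Matrix.add_mul, Matrix.mul_one, rot_mul_rot]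
  rw [Matrix.mul_smul, Matrix.smul_mul, rot_conj_N]
  simp [Wmat, rot_zero]

lemma Dg_mul_Dg_inv (t : ℝ) (ht : t ≠ 0) : Dg t * Dg t⁻¹ = 1 := by
  have ht' : (t:ℂ) ≠ 0 := Complex.ofReal_ne_zero.2 ht
  ext i j
  fin_cases i <;> fin_cases j <;>
    simp [Dg, Matrix.mul_apply, Fin.sum_univ_two, Matrix.one_apply] <;>
    push_cast <;> field_simp

lemma Dg_inv_mul_Dg (t : ℝ) (ht : t ≠ 0) : Dg t⁻¹ * Dg t = 1 := by
  have ht' : (t:ℂ) ≠ 0 := Complex.ofReal_ne_zero.2 ht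
  ext i j
  fin_cases i <;> fin_cases j <;>
    simp [Dg, Matrix.mul_apply, Fin.sum_univ_two, Matrix.one_apply] <;>
    push_cast <;> field_simp

lemma Dg_comm_N (t : ℝ) (ht : t ≠ 0) (c : ℂ) :
    Dg t * (1 + c • Nm) = (1 + (((t:ℂ))^2 * c) • Nm) * Dg t := by
  have ht' : (t:ℂ) ≠ 0 := Complex.ofReal_ne_zero.2 ht
  ext i j
  fin_cases i <;> fin_cases j <;>
    simp [Dg, Nm, Matrix.mul_apply, Fin.sum_univ_two, Matrix.one_apply,
      Matrix.add_apply, Matrix.smul_apply] <;> push_cast <;> field_simp <;> ring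

lemma M_conj (t : ℝ) (ht : t ≠ 0) (c : ℂ) :
    (1 + c • Nm) = Dg t⁻¹ * (1 + (((t:ℂ))^2 * c) • Nm) * Dg t := by
  have h := Dg_comm_N t ht c
  calc (1 + c • Nm) = (Dg t⁻¹ * Dg t) * (1 + c • Nm) := by rw [Dg_inv_mul_Dg t ht, Matrix.one_mul]
    _ = Dg t⁻¹ * (Dg t * (1 + c • Nm)) := by rw [Matrix.mul_assoc]
    _ = Dg t⁻¹ * ((1 + (((t:ℂ))^2 * c) • Nm) * Dg t) := by rw [h]
    _ = _ := by rw [Matrix.mul_assoc]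

lemma norm_rot_le (θ : ℝ) : ‖RotM θ‖ ≤ 1 := by
  refine norm_cols_le _ (Real.cos θ) (-Real.sin θ) (Real.sin θ) (Real.cos θ) 1 ?_ zero_le_one ?_ ?_ ?_
  · simp [RotM]
  · nlinarith [Real.sin_sq_add_cos_sq θ]
  · nlinarith [Real.sin_sq_add_cos_sq θ]
  · ring

lemma norm_one_le : ‖(1 : Matrix (Fin 2) (Fin 2) ℂ)‖ ≤ 1 := by
  refine norm_cols_le _ 1 0 0 1 1 ?_ zero_le_one (by norm_num) (by norm_num) (by norm_num)
  ext i j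
  fin_cases i <;> fin_cases j <;> simp [Matrix.one_apply]

lemma norm_Nm_le : ‖Nm‖ ≤ 1 := by
  refine norm_cols_le _ 0 (-1) 0 0 1 ?_ zero_le_one (by norm_num) (by norm_num) (by norm_num)
  simp [Nm]

lemma norm_Dg_le (t : ℝ) (h0 : 0 < t) (h1 : t ≤ 1) : ‖Dg t‖ ≤ t⁻¹ := by
  refine norm_cols_le _ t 0 0 t⁻¹ t⁻¹ (by simp [Dg]) (by positivity) ?_ ?_ (by ring)
  · have : t ≤ t⁻¹ := le_trans h1 (one_le_inv_iff₀.2 ⟨h0, h1⟩)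
    nlinarith
  · nlinarith [inv_pos.2 h0]

lemma norm_Dg_inv_le (t : ℝ) (h0 : 0 < t) (h1 : t ≤ 1) : ‖Dg t⁻¹‖ ≤ t⁻¹ := by
  refine norm_cols_le _ t⁻¹ 0 0 t t⁻¹ ?_ (by positivity) ?_ ?_ (by ring)
  · simp [Dg]
  · nlinarith [inv_pos.2 h0]
  · have : t ≤ t⁻¹ := le_trans h1 (one_le_inv_iff₀.2 ⟨h0, h1⟩)
    nlinarith

lemma norm_M_le (c : ℂ) : ‖(1 : Matrix (Fin 2) (Fin 2) ℂ) + c • Nm‖ ≤ 1 + ‖c‖ := by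
  calc ‖(1 : Matrix (Fin 2) (Fin 2) ℂ) + c • Nm‖ ≤ ‖(1 : Matrix (Fin 2) (Fin 2) ℂ)‖ + ‖c • Nm‖ :=
        norm_add_le _ _
    _ ≤ 1 + ‖c‖ * ‖Nm‖ := by
        rw [norm_smul]
        exact add_le_add norm_one_le le_rfl
    _ ≤ 1 + ‖c‖ := by nlinarith [norm_Nm_le, norm_nonneg c]

lemma norm_bridge_le (α β θ : ℝ) (hα0 : 0 < α) (hα1 : α ≤ 1) (hβ0 : 0 < β) (hβ1 : β ≤ 1) :
    ‖Dg α * RotM θ * Dg β⁻¹‖ ≤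
      max (α / β) (β / α) * |Real.cos θ| + |Real.sin θ| / (α * β) := by
  have hα : (α:ℂ) ≠ 0 := Complex.ofReal_ne_zero.2 hα0.ne'
  have hβ : (β:ℂ) ≠ 0 := Complex.ofReal_ne_zero.2 hβ0.ne'
  have hab0 : 0 < α * β := by positivity
  have hab1 : α * β ≤ 1 := by nlinarith
  have hmax : 0 ≤ max (α / β) (β / α) := le_trans (by positivity) (le_max_left _ _)
  have hsplit : Dg α * RotM θ * Dg β⁻¹ =
      !![((α / β * Real.cos θ : ℝ) : ℂ), 0; 0, ((β / α * Real.cos θ : ℝ) : ℂ)] +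
      !![0, ((-(α * β * Real.sin θ) : ℝ) : ℂ); ((Real.sin θ / (α * β) : ℝ) : ℂ), 0] := by
    ext i j
    fin_cases i <;> fin_cases j <;>
      simp only [Dg, RotM, Matrix.mul_apply, Fin.sum_univ_two, Matrix.add_apply,
        Matrix.cons_val', Matrix.cons_val_zero, Matrix.cons_val_one, Matrix.head_cons,
        Matrix.empty_val', Matrix.cons_val_fin_one, Matrix.head_fin_const, Fin.isValue,
        Matrix.of_apply] <;>
      push_cast <;> field_simp <;> ring
  rw [hsplit]
  refine le_trans (norm_add_le _ _) (add_le_add ?_ ?_)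
  · refine norm_cols_le _ (α / β * Real.cos θ) 0 0 (β / α * Real.cos θ)
      (max (α / β) (β / α) * |Real.cos θ|) rfl (by positivity) ?_ ?_ (by ring)
    · have h : α / β ≤ max (α / β) (β / α) := le_max_left _ _
      have h0 : 0 ≤ α / β := by positivity
      calc (α / β * Real.cos θ)^2 + 0^2 = (α/β)^2 * (Real.cos θ)^2 := by ring
        _ ≤ (max (α / β) (β / α))^2 * (Real.cos θ)^2 := by
            nlinarith [mul_le_mul h h h0 (le_trans h0 h), sq_nonneg (Real.cos θ)]
        _ = (max (α / β) (β / α) * |Real.cos θ|)^2 := by rw [mul_pow, sq_abs]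
    · have h : β / α ≤ max (α / β) (β / α) := le_max_right _ _
      have h0 : 0 ≤ β / α := by positivity
      calc 0^2 + (β / α * Real.cos θ)^2 = (β/α)^2 * (Real.cos θ)^2 := by ring
        _ ≤ (max (α / β) (β / α))^2 * (Real.cos θ)^2 := by
            nlinarith [mul_le_mul h h h0 (le_trans h0 h), sq_nonneg (Real.cos θ)]
        _ = (max (α / β) (β / α) * |Real.cos θ|)^2 := by rw [mul_pow, sq_abs]
  · refine norm_cols_le _ 0 (-(α * β * Real.sin θ)) (Real.sin θ / (α * β)) 0
      (|Real.sin θ| / (α * β)) rfl (by positivity) ?_ ?_ (by ring)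
    · have hC : (|Real.sin θ| / (α * β))^2 = (Real.sin θ)^2 / (α*β)^2 := by
        rw [div_pow, sq_abs]
      have h4 : (α*β)^4 ≤ 1 := pow_le_one₀ hab0.le hab1
      calc 0^2 + (Real.sin θ / (α * β))^2 = (Real.sin θ)^2 / (α*β)^2 := by rw [div_pow]; ring
        _ ≤ (|Real.sin θ| / (α * β))^2 := by rw [hC]
    · have hC : (|Real.sin θ| / (α * β))^2 = (Real.sin θ)^2 / (α*β)^2 := by
        rw [div_pow, sq_abs]
      have h4 : (α*β)^4 ≤ 1 := pow_le_one₀ hab0.le hab1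
      calc (-(α * β * Real.sin θ))^2 + 0^2 = (α*β)^2 * (Real.sin θ)^2 := by ring
        _ ≤ (Real.sin θ)^2 / (α*β)^2 := by
            rw [le_div_iff₀ (by positivity)]
            nlinarith [h4, sq_nonneg (Real.sin θ)]
        _ = (|Real.sin θ| / (α * β))^2 := hC.symm

noncomputable def Ma (l a : ℕ → ℝ) (z : ℂ) (j : ℕ) : Matrix (Fin 2) (Fin 2) ℂ :=
  1 + (((a j : ℂ))^2 * (z * (l j : ℂ))) • Nm

noncomputable def Brm (φ a : ℕ → ℝ) (j : ℕ) : Matrix (Fin 2) (Fin 2) ℂ :=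
  Dg (a j) * RotM (φ (j+1) - φ j) * Dg ((a (j+1))⁻¹)

noncomputable def Qm (l φ a : ℕ → ℝ) (z : ℂ) : ℕ → Matrix (Fin 2) (Fin 2) ℂ
  | 0 => 1
  | 1 => Ma l a z 1
  | (k+2) => Qm l φ a z (k+1) * Brm φ a (k+1) * Ma l a z (k+2)

lemma Qm_succ (l φ a : ℕ → ℝ) (z : ℂ) (k : ℕ) (hk : 1 ≤ k) :
    Qm l φ a z (k+1) = Qm l φ a z k * Brm φ a k * Ma l a z (k+1) := by
  obtain ⟨m, rfl⟩ : ∃ m, k = m + 1 := ⟨k - 1, by omega⟩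
  rfl

lemma norm_Ma_le (l a : ℕ → ℝ) (z : ℂ) (j : ℕ) (hl : 0 < l j) (ha : 0 < a j) :
    ‖Ma l a z j‖ ≤ 1 + ‖z‖ * l j * a j ^ 2 := by
  have hc : ‖((a j : ℂ))^2 * (z * (l j : ℂ))‖ = ‖z‖ * l j * a j ^ 2 := by
    rw [norm_mul, norm_mul, norm_pow, Complex.norm_real,
      Complex.norm_real, Real.norm_eq_abs, Real.norm_eq_abs, abs_of_pos ha, abs_of_pos hl]
    ring
  calc ‖Ma l a z j‖ ≤ 1 + ‖((a j : ℂ))^2 * (z * (l j : ℂ))‖ := norm_M_le _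
    _ = 1 + ‖z‖ * l j * a j ^ 2 := by rw [hc]

lemma key (l φ a : ℕ → ℝ) (z : ℂ) (N : ℕ)
    (hl : ∀ j, 1 ≤ j → j ≤ N → 0 < l j)
    (ha : ∀ j, 1 ≤ j → j ≤ N → 0 < a j ∧ a j ≤ 1) :
    ∀ k, 1 ≤ k → k ≤ N →
    (((List.range k).map (fun i => Wmat l φ z (i + 1))).prod
        = RotM (φ 1) * Dg ((a 1)⁻¹) * Qm l φ a z k * Dg (a k) * RotM (-(φ k))) ∧
    ‖Qm l φ a z k‖ ≤ (∏ j ∈ Finset.Icc 1 k, (1 + ‖z‖ * l j * a j ^ 2)) *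
      (∏ j ∈ Finset.Icc 1 (k-1),
        (max (a j / a (j + 1)) (a (j + 1) / a j) * |Real.cos (φ j - φ (j + 1))| +
          |Real.sin (φ j - φ (j + 1))| / (a j * a (j + 1)))) := by
  intro k hk1
  induction k, hk1 using Nat.le_induction with
  | base =>
    intro hkN
    have ha1 := ha 1 le_rfl hkN
    have hl1 := hl 1 le_rfl hkN
    constructor
    · have h1 : ((List.range 1).map (fun i => Wmat l φ z (i + 1))).prod = Wmat l φ z 1 := by
        rw [show List.range 1 = [0] from rfl, List.map_singleton, List.prod_singleton]
      rw [h1, Wmat_eq, M_conj (a 1) ha1.1.ne' (z * (l 1 : ℂ))]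
      show _ = RotM (φ 1) * Dg (a 1)⁻¹ * Ma l a z 1 * Dg (a 1) * RotM (-(φ 1))
      simp only [Ma, Matrix.mul_assoc]
    · have h0 : (1:ℕ) - 1 = 0 := rfl
      rw [h0]
      have : Finset.Icc 1 0 = (∅ : Finset ℕ) := Finset.Icc_eq_empty (by omega)
      rw [this, Finset.prod_empty, mul_one, Finset.Icc_self, Finset.prod_singleton]
      show ‖Ma l a z 1‖ ≤ _
      exact norm_Ma_le l a z 1 hl1 ha1.1
  | succ k hk IH =>
    intro hkN
    have hkN' : k ≤ N := by omega
    obtain ⟨IH1, IH2⟩ := IH hkN'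
    have hak := ha k (by omega) hkN'
    have hak1 := ha (k+1) (by omega) hkN
    have hlk1 := hl (k+1) (by omega) hkN
    constructor
    · rw [List.range_succ, List.map_append, List.prod_append, IH1]
      simp only [List.map_cons, List.map_nil, List.prod_cons, List.prod_nil, mul_one]
      rw [Wmat_eq, M_conj (a (k+1)) hak1.1.ne' (z * (l (k+1) : ℂ))]
      rw [Qm_succ l φ a z k hk]
      have hrot : ∀ X : Matrix (Fin 2) (Fin 2) ℂ,
          RotM (-(φ k)) * (RotM (φ (k+1)) * X) = RotM (φ (k+1) - φ k) * X := by
        intro X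
        rw [← Matrix.mul_assoc, rot_mul_rot]
        congr 2
        ring
      show _ = RotM (φ 1) * Dg (a 1)⁻¹ *
          (Qm l φ a z k * (Dg (a k) * RotM (φ (k+1) - φ k) * Dg ((a (k+1))⁻¹)) *
            Ma l a z (k+1)) * Dg (a (k+1)) * RotM (-(φ (k+1)))
      simp only [Ma, Matrix.mul_assoc, hrot]
    · have hbr : ‖Brm φ a k‖ ≤
          max (a k / a (k + 1)) (a (k + 1) / a k) * |Real.cos (φ k - φ (k + 1))| +
            |Real.sin (φ k - φ (k + 1))| / (a k * a (k + 1)) := by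
        have h := norm_bridge_le (a k) (a (k+1)) (φ (k+1) - φ k) hak.1 hak.2 hak1.1 hak1.2
        have hc : |Real.cos (φ (k+1) - φ k)| = |Real.cos (φ k - φ (k+1))| := by
          rw [← neg_sub (φ k) (φ (k+1)), Real.cos_neg]
        have hs : |Real.sin (φ (k+1) - φ k)| = |Real.sin (φ k - φ (k+1))| := by
          rw [← neg_sub (φ k) (φ (k+1)), Real.sin_neg, abs_neg]
        rw [hc, hs] at h
        exact h
      have hma : ‖Ma l a z (k+1)‖ ≤ 1 + ‖z‖ * l (k+1) * a (k+1) ^ 2 :=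
        norm_Ma_le l a z (k+1) hlk1 hak1.1
      set A := ∏ j ∈ Finset.Icc 1 k, (1 + ‖z‖ * l j * a j ^ 2) with hA
      set B := ∏ j ∈ Finset.Icc 1 (k-1),
        (max (a j / a (j + 1)) (a (j + 1) / a j) * |Real.cos (φ j - φ (j + 1))| +
          |Real.sin (φ j - φ (j + 1))| / (a j * a (j + 1))) with hB
      have hAnn : 0 ≤ A := by
        refine Finset.prod_nonneg fun j hj => ?_
        rw [Finset.mem_Icc] at hj
        have := hl j hj.1 (by omega)
        have := (ha j hj.1 (by omega)).1
        positivity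
      have hBnn : 0 ≤ B := by
        refine Finset.prod_nonneg fun j hj => ?_
        rw [Finset.mem_Icc] at hj
        have h1 := (ha j hj.1 (by omega)).1
        have h2 := (ha (j+1) (by omega) (by omega)).1
        have h3 : (0:ℝ) ≤ max (a j / a (j + 1)) (a (j + 1) / a j) :=
          le_trans (by positivity) (le_max_left _ _)
        exact add_nonneg (mul_nonneg h3 (abs_nonneg _))
          (div_nonneg (abs_nonneg _) (by positivity))
      have hbrnn : 0 ≤ max (a k / a (k + 1)) (a (k + 1) / a k) * |Real.cos (φ k - φ (k + 1))| +
          |Real.sin (φ k - φ (k + 1))| / (a k * a (k + 1)) := by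
        have h1 := hak.1
        have h2 := hak1.1
        have h3 : (0:ℝ) ≤ max (a k / a (k + 1)) (a (k + 1) / a k) :=
          le_trans (by positivity) (le_max_left _ _)
        exact add_nonneg (mul_nonneg h3 (abs_nonneg _))
          (div_nonneg (abs_nonneg _) (by positivity))
      have step1 : ‖Qm l φ a z (k+1)‖ ≤ ‖Qm l φ a z k‖ * ‖Brm φ a k‖ * ‖Ma l a z (k+1)‖ := by
        rw [Qm_succ l φ a z k hk]
        calc ‖Qm l φ a z k * Brm φ a k * Ma l a z (k+1)‖
            ≤ ‖Qm l φ a z k * Brm φ a k‖ * ‖Ma l a z (k+1)‖ := norm_mul_le _ _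
          _ ≤ ‖Qm l φ a z k‖ * ‖Brm φ a k‖ * ‖Ma l a z (k+1)‖ :=
              mul_le_mul_of_nonneg_right (norm_mul_le _ _) (norm_nonneg _)
      have step2 : ‖Qm l φ a z k‖ * ‖Brm φ a k‖ * ‖Ma l a z (k+1)‖ ≤
          (A * B) *
          (max (a k / a (k + 1)) (a (k + 1) / a k) * |Real.cos (φ k - φ (k + 1))| +
            |Real.sin (φ k - φ (k + 1))| / (a k * a (k + 1))) *
          (1 + ‖z‖ * l (k+1) * a (k+1) ^ 2) := by
        have h1 : ‖Qm l φ a z k‖ * ‖Brm φ a k‖ ≤ (A * B) *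
            (max (a k / a (k + 1)) (a (k + 1) / a k) * |Real.cos (φ k - φ (k + 1))| +
              |Real.sin (φ k - φ (k + 1))| / (a k * a (k + 1))) :=
          mul_le_mul IH2 hbr (norm_nonneg _) (mul_nonneg hAnn hBnn)
        exact mul_le_mul h1 hma (norm_nonneg _) (by positivity)
      have hprodA : ∏ j ∈ Finset.Icc 1 (k+1), (1 + ‖z‖ * l j * a j ^ 2)
          = A * (1 + ‖z‖ * l (k+1) * a (k+1) ^ 2) := by
        rw [hA, Finset.prod_Icc_succ_top (by omega)]
      have hprodB : (∏ j ∈ Finset.Icc 1 (k+1-1),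
          (max (a j / a (j + 1)) (a (j + 1) / a j) * |Real.cos (φ j - φ (j + 1))| +
            |Real.sin (φ j - φ (j + 1))| / (a j * a (j + 1))))
          = B * (max (a k / a (k + 1)) (a (k + 1) / a k) * |Real.cos (φ k - φ (k + 1))| +
            |Real.sin (φ k - φ (k + 1))| / (a k * a (k + 1))) := by
        have hk' : k - 1 + 1 = k := by omega
        have hk'' : k + 1 - 1 = k := by omega
        rw [hk'', hB, ← hk', Finset.prod_Icc_succ_top (by omega)]
        rw [hk']
      rw [hprodA, hprodB]
      calc ‖Qm l φ a z (k+1)‖ ≤ _ := le_trans step1 step2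
        _ = A * (1 + ‖z‖ * l (k+1) * a (k+1) ^ 2) *
            (B * (max (a k / a (k + 1)) (a (k + 1) / a k) * |Real.cos (φ k - φ (k + 1))| +
              |Real.sin (φ k - φ (k + 1))| / (a k * a (k + 1)))) := by ring


lemma opNormC_eq (M : Matrix (Fin 2) (Fin 2) ℂ) : opNormC M = ‖M‖ := rfl

theorem stmt3 (N : ℕ) (hN : 1 ≤ N) (l φ a : ℕ → ℝ)
    (hl : ∀ j, 1 ≤ j → j ≤ N → 0 < l j)
    (ha : ∀ j, 1 ≤ j → j ≤ N → 0 < a j ∧ a j ≤ 1) (z : ℂ) :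
    opNormC (((List.range N).map (fun i => Wmat l φ z (i + 1))).prod) ≤
      (a 1 * a N)⁻¹ *
        (∏ j ∈ Finset.Icc 1 N, (1 + ‖z‖ * l j * a j ^ 2)) *
        (∏ j ∈ Finset.Icc 1 (N - 1),
          (max (a j / a (j + 1)) (a (j + 1) / a j) * |Real.cos (φ j - φ (j + 1))| +
            |Real.sin (φ j - φ (j + 1))| / (a j * a (j + 1)))) := by
  obtain ⟨hP, hQ⟩ := key l φ a z N hl ha N hN le_rfl
  have ha1 := ha 1 le_rfl hN
  have haN := ha N hN le_rfl
  rw [opNormC_eq, hP]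
  set Q := Qm l φ a z N with hQdef
  set P1 := ∏ j ∈ Finset.Icc 1 N, (1 + ‖z‖ * l j * a j ^ 2) with hP1
  set P2 := ∏ j ∈ Finset.Icc 1 (N - 1),
      (max (a j / a (j + 1)) (a (j + 1) / a j) * |Real.cos (φ j - φ (j + 1))| +
        |Real.sin (φ j - φ (j + 1))| / (a j * a (j + 1))) with hP2
  have hPQnn : 0 ≤ P1 * P2 := le_trans (norm_nonneg Q) hQ
  have chain : ‖RotM (φ 1) * Dg (a 1)⁻¹ * Q * Dg (a N) * RotM (-(φ N))‖ ≤
      ‖RotM (φ 1)‖ * ‖Dg (a 1)⁻¹‖ * ‖Q‖ * ‖Dg (a N)‖ * ‖RotM (-(φ N))‖ := by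
    calc ‖RotM (φ 1) * Dg (a 1)⁻¹ * Q * Dg (a N) * RotM (-(φ N))‖
        ≤ ‖RotM (φ 1) * Dg (a 1)⁻¹ * Q * Dg (a N)‖ * ‖RotM (-(φ N))‖ := norm_mul_le _ _
      _ ≤ ‖RotM (φ 1) * Dg (a 1)⁻¹ * Q‖ * ‖Dg (a N)‖ * ‖RotM (-(φ N))‖ :=
          mul_le_mul_of_nonneg_right (norm_mul_le _ _) (norm_nonneg _)
      _ ≤ ‖RotM (φ 1) * Dg (a 1)⁻¹‖ * ‖Q‖ * ‖Dg (a N)‖ * ‖RotM (-(φ N))‖ :=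
          mul_le_mul_of_nonneg_right (mul_le_mul_of_nonneg_right
            (norm_mul_le _ _) (norm_nonneg _)) (norm_nonneg _)
      _ ≤ ‖RotM (φ 1)‖ * ‖Dg (a 1)⁻¹‖ * ‖Q‖ * ‖Dg (a N)‖ * ‖RotM (-(φ N))‖ :=
          mul_le_mul_of_nonneg_right (mul_le_mul_of_nonneg_right
            (mul_le_mul_of_nonneg_right (norm_mul_le _ _) (norm_nonneg _))
            (norm_nonneg _)) (norm_nonneg _)
  have hinv1 : (0:ℝ) ≤ (a 1)⁻¹ := inv_nonneg.2 ha1.1.le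
  have hinvN : (0:ℝ) ≤ (a N)⁻¹ := inv_nonneg.2 haN.1.le
  have L2 : ‖RotM (φ 1)‖ * ‖Dg (a 1)⁻¹‖ ≤ 1 * (a 1)⁻¹ :=
    mul_le_mul (norm_rot_le _) (norm_Dg_inv_le (a 1) ha1.1 ha1.2) (norm_nonneg _) zero_le_one
  have L3 : ‖RotM (φ 1)‖ * ‖Dg (a 1)⁻¹‖ * ‖Q‖ ≤ 1 * (a 1)⁻¹ * (P1 * P2) :=
    mul_le_mul L2 hQ (norm_nonneg _) (mul_nonneg zero_le_one hinv1)
  have L4 : ‖RotM (φ 1)‖ * ‖Dg (a 1)⁻¹‖ * ‖Q‖ * ‖Dg (a N)‖ ≤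
      1 * (a 1)⁻¹ * (P1 * P2) * (a N)⁻¹ :=
    mul_le_mul L3 (norm_Dg_le (a N) haN.1 haN.2) (norm_nonneg _)
      (mul_nonneg (mul_nonneg zero_le_one hinv1) hPQnn)
  have L5 : ‖RotM (φ 1)‖ * ‖Dg (a 1)⁻¹‖ * ‖Q‖ * ‖Dg (a N)‖ * ‖RotM (-(φ N))‖ ≤
      1 * (a 1)⁻¹ * (P1 * P2) * (a N)⁻¹ * 1 :=
    mul_le_mul L4 (norm_rot_le _) (norm_nonneg _)
      (mul_nonneg (mul_nonneg (mul_nonneg zero_le_one hinv1) hPQnn) hinvN)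
  have hfin : 1 * (a 1)⁻¹ * (P1 * P2) * (a N)⁻¹ * 1 = (a 1 * a N)⁻¹ * P1 * P2 := by
    rw [mul_inv]; ring
  calc ‖RotM (φ 1) * Dg (a 1)⁻¹ * Q * Dg (a N) * RotM (-(φ N))‖
      ≤ 1 * (a 1)⁻¹ * (P1 * P2) * (a N)⁻¹ * 1 := le_trans chain L5
    _ = (a 1 * a N)⁻¹ * P1 * P2 := hfin
end

section
/- Let (φ_j)_{j=1}^∞ be a sequence of real numbers with ∑_{j=1}^∞ |sin(φ_{j+1} − φ_j)| < ∞. Then there exists a sequence (k_j) of integers such that (φ_j + k_j·π)_{j=1}^∞ converges to a real limit ψ. -/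
open Real

lemma key_bound (x : ℝ) : |x - (round (x / π) : ℝ) * π| ≤ 2 * |Real.sin x| := by
  set n : ℤ := round (x / π)
  have hπ : (0:ℝ) < π := Real.pi_pos
  have h1 : |x - (n:ℝ) * π| ≤ π / 2 := by
    have hr := abs_sub_round (x / π)
    have heq : x - (n:ℝ) * π = (x / π - (n:ℝ)) * π := by field_simp
    rw [heq, abs_mul, abs_of_pos hπ]
    nlinarith
  have hsin : |Real.sin (x - (n:ℝ) * π)| = |Real.sin x| := by
    rw [Real.sin_sub_int_mul_pi, abs_mul]
    rcases n.even_or_odd with he | ho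
    · rw [he.neg_one_zpow]; simp
    · rw [ho.neg_one_zpow]; simp
  have h3 := Real.mul_abs_le_abs_sin h1
  rw [hsin] at h3
  -- 2/π * |x - nπ| ≤ |sin x|, so |x - nπ| ≤ π/2 * |sin x| ≤ 2 |sin x|
  have hπ4 : π ≤ 4 := by linarith [Real.pi_le_four]
  rw [div_mul_eq_mul_div, div_le_iff₀ hπ] at h3
  nlinarith [abs_nonneg (Real.sin x)]

theorem stmt5 (φ : ℕ → ℝ)
    (h : Summable fun j => |Real.sin (φ (j + 1) - φ j)|) :
    ∃ (k : ℕ → ℤ) (ψ : ℝ),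
      Filter.Tendsto (fun j => φ j + (k j : ℝ) * Real.pi) Filter.atTop (nhds ψ) := by
  set k : ℕ → ℤ := fun j => Nat.rec 0 (fun i ki => ki - round ((φ (i + 1) - φ i) / π)) j with hk
  refine ⟨k, ?_⟩
  set f : ℕ → ℝ := fun j => φ j + (k j : ℝ) * π with hf
  have hdiff : ∀ j, f (j + 1) - f j
      = (φ (j + 1) - φ j) - (round ((φ (j + 1) - φ j) / π) : ℝ) * π := by
    intro j
    have : k (j + 1) = k j - round ((φ (j + 1) - φ j) / π) := rfl
    simp only [hf, this]
    push_cast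
    ring
  have hcauchy : CauchySeq f := by
    apply cauchySeq_of_summable_dist
    refine Summable.of_nonneg_of_le (fun j => dist_nonneg) (fun j => ?_) (h.mul_left 2)
    rw [dist_comm, Real.dist_eq, hdiff j]
    exact key_bound _
  obtain ⟨ψ, hψ⟩ := cauchySeq_tendsto_of_complete hcauchy
  exact ⟨ψ, hψ⟩
end

section
/- Let a : [1,∞) → (0,∞) be slowly varying (regularly varying of index 0) and bounded on compact subsets of [1,∞). For R ≥ a(1) define b(R) := sup{ t ∈ [1,∞) : sup_{1≤s≤t} a(s)/R ≤ 1 } ∈ [1,∞]. Then for every ρ > 0 there exists R₀ such that R^ρ ≤ b(R) for all R ≥ R₀. -/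
open Filter

private lemma doubling_iter (a : ℝ → ℝ) (ε r₀ C₀ : ℝ) (hr₀ : 1 ≤ r₀)
    (hC₀1 : 1 ≤ C₀)
    (hε1 : 1 ≤ (2:ℝ) ^ ε)
    (hC₀ : ∀ s, 1 ≤ s → s ≤ 2 * r₀ → a s ≤ C₀)
    (hd : ∀ r, r₀ ≤ r → a (2 * r) ≤ 2 ^ ε * a r) :
    ∀ k : ℕ, ∀ s, r₀ ≤ s → s ≤ 2 ^ (k + 1) * r₀ → a s ≤ C₀ * ((2:ℝ) ^ ε) ^ k := by
  intro k
  induction k with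
  | zero =>
      intro s hs1 hs2
      simpa using hC₀ s (le_trans hr₀ hs1) (by simpa using hs2)
  | succ k ih =>
      intro s hs1 hs2
      have hC₀0 : (0:ℝ) ≤ C₀ := le_trans zero_le_one hC₀1
      by_cases h : s ≤ 2 ^ (k + 1) * r₀
      · calc a s ≤ C₀ * ((2:ℝ) ^ ε) ^ k := ih s hs1 h
          _ ≤ C₀ * ((2:ℝ) ^ ε) ^ (k + 1) := by
              apply mul_le_mul_of_nonneg_left _ hC₀0
              exact pow_le_pow_right₀ hε1 (Nat.le_succ k)
      · push_neg at h
        have hr₀0 : (0:ℝ) < r₀ := lt_of_lt_of_le zero_lt_one hr₀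
        have h2 : r₀ ≤ s / 2 := by
          have h21 : (2:ℝ) ≤ 2 ^ (k+1) := by
            calc (2:ℝ) = 2 ^ 1 := (pow_one 2).symm
              _ ≤ 2 ^ (k+1) := pow_le_pow_right₀ one_le_two (Nat.le_add_left 1 k)
          nlinarith
        have h3 : s / 2 ≤ 2 ^ (k + 1) * r₀ := by
          have hs2' : s ≤ 2 ^ (k + 2) * r₀ := hs2
          have hpow : (2:ℝ) ^ (k + 2) = 2 * 2 ^ (k + 1) := by ring
          nlinarith
        have hds := hd (s / 2) h2
        have hs : 2 * (s / 2) = s := by ring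
        rw [hs] at hds
        calc a s ≤ 2 ^ ε * a (s / 2) := hds
          _ ≤ 2 ^ ε * (C₀ * ((2:ℝ) ^ ε) ^ k) := by
              apply mul_le_mul_of_nonneg_left (ih (s/2) h2 h3)
              exact le_trans zero_le_one hε1
          _ = C₀ * ((2:ℝ) ^ ε) ^ (k + 1) := by ring

private lemma potter (a : ℝ → ℝ)
    (hpos : ∀ t, 1 ≤ t → 0 < a t)
    (hsv : ∀ l : ℝ, 0 < l →
      Tendsto (fun r => a (l * r) / a r) atTop (nhds 1))
    (hloc : ∀ T, 1 ≤ T → ∃ C, ∀ s ∈ Set.Icc (1 : ℝ) T, a s ≤ C)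
    (ε : ℝ) (hε : 0 < ε) :
    ∃ C : ℝ, 1 ≤ C ∧ ∀ s, 1 ≤ s → a s ≤ C * s ^ ε := by
  have h2ε : (1:ℝ) < 2 ^ ε :=
    (Real.one_lt_rpow_iff_of_pos two_pos).mpr (Or.inl ⟨one_lt_two, hε⟩)
  have hε1 : (1:ℝ) ≤ 2 ^ ε := h2ε.le
  have hev : ∀ᶠ r in atTop, a (2 * r) / a r ≤ 2 ^ ε :=
    (hsv 2 two_pos).eventually (eventually_le_nhds h2ε)
  obtain ⟨r₁, hr₁⟩ := eventually_atTop.mp hev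
  set r₀ : ℝ := max r₁ 1 with hr₀def
  have hr₀ : (1:ℝ) ≤ r₀ := le_max_right _ _
  have hr₀0 : (0:ℝ) < r₀ := lt_of_lt_of_le zero_lt_one hr₀
  have hd : ∀ r, r₀ ≤ r → a (2 * r) ≤ 2 ^ ε * a r := by
    intro r hr
    have hr1 : (1:ℝ) ≤ r := le_trans hr₀ hr
    have := hr₁ r (le_trans (le_max_left _ _) hr)
    calc a (2 * r) = (a (2 * r) / a r) * a r := by
          rw [div_mul_cancel₀ _ (hpos r hr1).ne']
      _ ≤ 2 ^ ε * a r := mul_le_mul_of_nonneg_right this (hpos r hr1).le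
  obtain ⟨C, hC⟩ := hloc (2 * r₀) (by nlinarith)
  set C₀ : ℝ := max C 1 with hC₀def
  have hC₀1 : (1:ℝ) ≤ C₀ := le_max_right _ _
  have hC₀0 : (0:ℝ) ≤ C₀ := le_trans zero_le_one hC₀1
  have hC₀ : ∀ s, 1 ≤ s → s ≤ 2 * r₀ → a s ≤ C₀ := fun s h1 h2 =>
    le_trans (hC s ⟨h1, h2⟩) (le_max_left _ _)
  have key := doubling_iter a ε r₀ C₀ hr₀ hC₀1 hε1 hC₀ hd
  refine ⟨C₀, hC₀1, fun s hs => ?_⟩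
  have hsε : (1:ℝ) ≤ s ^ ε := Real.one_le_rpow hs hε.le
  by_cases hcase : s ≤ r₀
  · calc a s ≤ C₀ := hC₀ s hs (by nlinarith)
      _ ≤ C₀ * s ^ ε := le_mul_of_one_le_right hC₀0 hsε
  · push_neg at hcase
    have hs0 : (0:ℝ) < s := lt_of_lt_of_le zero_lt_one hs
    have hdiv1 : (1:ℝ) ≤ s / r₀ := (one_le_div hr₀0).mpr hcase.le
    have hdiv0 : (0:ℝ) < s / r₀ := lt_of_lt_of_le zero_lt_one hdiv1
    set k : ℕ := ⌊Real.logb 2 (s / r₀)⌋₊ with hkdef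
    have hlog0 : 0 ≤ Real.logb 2 (s / r₀) := Real.logb_nonneg one_lt_two hdiv1
    have hk1 : (2:ℝ) ^ (k:ℝ) ≤ s / r₀ := by
      calc (2:ℝ) ^ (k:ℝ) ≤ (2:ℝ) ^ Real.logb 2 (s / r₀) :=
            Real.rpow_le_rpow_of_exponent_le one_le_two (Nat.floor_le hlog0)
        _ = s / r₀ := Real.rpow_logb two_pos (by norm_num) hdiv0
    have hk2 : s / r₀ < (2:ℝ) ^ ((k:ℝ) + 1) := by
      calc s / r₀ = (2:ℝ) ^ Real.logb 2 (s / r₀) :=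
            (Real.rpow_logb two_pos (by norm_num) hdiv0).symm
        _ < (2:ℝ) ^ ((k:ℝ) + 1) :=
            Real.rpow_lt_rpow_of_exponent_lt one_lt_two (Nat.lt_floor_add_one _)
    have hrpow : (2:ℝ) ^ ((k:ℝ) + 1) = (2:ℝ) ^ (k + 1 : ℕ) := by
      rw [← Real.rpow_natCast 2 (k + 1)]
      push_cast
      ring_nf
    have hs2 : s ≤ 2 ^ (k + 1) * r₀ := by
      rw [← hrpow]
      have := (div_lt_iff₀ hr₀0).mp hk2
      linarith
    have hmain : a s ≤ C₀ * ((2:ℝ) ^ ε) ^ k := key k s hcase.le hs2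
    have hpowk : ((2:ℝ) ^ ε) ^ k = ((2:ℝ) ^ (k:ℝ)) ^ ε := by
      rw [← Real.rpow_natCast ((2:ℝ) ^ ε) k, ← Real.rpow_mul (by norm_num : (0:ℝ) ≤ 2),
        mul_comm, Real.rpow_mul (by norm_num : (0:ℝ) ≤ 2)]
    calc a s ≤ C₀ * ((2:ℝ) ^ ε) ^ k := hmain
      _ = C₀ * ((2:ℝ) ^ (k:ℝ)) ^ ε := by rw [hpowk]
      _ ≤ C₀ * (s / r₀) ^ ε := by
          apply mul_le_mul_of_nonneg_left _ hC₀0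
          exact Real.rpow_le_rpow (Real.rpow_nonneg (by norm_num) _) hk1 hε.le
      _ ≤ C₀ * s ^ ε := by
          apply mul_le_mul_of_nonneg_left _ hC₀0
          exact Real.rpow_le_rpow hdiv0.le (div_le_self hs0.le hr₀) hε.le

/-- b(R) := sup{ t ∈ [1,∞) : sup_{1≤s≤t} a(s)/R ≤ 1 }, as an element of [1,∞]. -/
noncomputable def bFun (a : ℝ → ℝ) (R : ℝ) : ENNReal :=
  sSup (ENNReal.ofReal '' {t : ℝ | 1 ≤ t ∧ ∀ s, 1 ≤ s → s ≤ t → a s / R ≤ 1})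

theorem stmt6 (a : ℝ → ℝ)
    (hpos : ∀ t, 1 ≤ t → 0 < a t)
    (hsv : ∀ l : ℝ, 0 < l →
      Tendsto (fun r => a (l * r) / a r) atTop (nhds 1))
    (hloc : ∀ T, 1 ≤ T → ∃ C, ∀ s ∈ Set.Icc (1 : ℝ) T, a s ≤ C) :
    ∀ ρ : ℝ, 0 < ρ → ∃ R₀ : ℝ, ∀ R, a 1 ≤ R → R₀ ≤ R →
      ENNReal.ofReal (R ^ ρ) ≤ bFun a R := by
  intro ρ hρ
  obtain ⟨C, hC1, hC⟩ := potter a hpos hsv hloc (1 / (2 * ρ)) (by positivity)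
  refine ⟨max (C ^ 2) 1, fun R hRa hRR => ?_⟩
  have hR1 : (1:ℝ) ≤ R := le_trans (le_max_right _ _) hRR
  have hR0 : (0:ℝ) < R := lt_of_lt_of_le zero_lt_one hR1
  have hC0 : (0:ℝ) ≤ C := le_trans zero_le_one hC1
  have hRC : C ^ 2 ≤ R := le_trans (le_max_left _ _) hRR
  have hRρ1 : (1:ℝ) ≤ R ^ ρ := Real.one_le_rpow hR1 hρ.le
  have hCR : C ≤ R ^ ((1:ℝ)/2) := by
    have h1 : (C ^ 2 : ℝ) ^ ((1:ℝ)/2) ≤ R ^ ((1:ℝ)/2) :=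
      Real.rpow_le_rpow (sq_nonneg C) hRC (by norm_num)
    have h2 : (C ^ 2 : ℝ) ^ ((1:ℝ)/2) = C := by
      rw [← Real.rpow_natCast C 2, ← Real.rpow_mul hC0]
      norm_num
    linarith
  have key : ∀ s, 1 ≤ s → s ≤ R ^ ρ → a s ≤ R := by
    intro s h1 h2
    have hs0 : (0:ℝ) ≤ s := le_trans zero_le_one h1
    have hexp : ρ * (1 / (2 * ρ)) = 1 / 2 := by
      field_simp
    calc a s ≤ C * s ^ (1 / (2 * ρ)) := hC s h1
      _ ≤ C * (R ^ ρ) ^ (1 / (2 * ρ)) := by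
          apply mul_le_mul_of_nonneg_left _ hC0
          exact Real.rpow_le_rpow hs0 h2 (by positivity)
      _ = C * R ^ ((1:ℝ)/2) := by
          rw [← Real.rpow_mul hR0.le, hexp]
      _ ≤ R ^ ((1:ℝ)/2) * R ^ ((1:ℝ)/2) := by
          apply mul_le_mul_of_nonneg_right hCR (Real.rpow_nonneg hR0.le _)
      _ = R := by
          rw [← Real.rpow_add hR0]
          norm_num
  unfold bFun
  apply le_sSup
  refine ⟨R ^ ρ, ⟨hRρ1, fun s h1 h2 => ?_⟩, rfl⟩
  rw [div_le_one hR0]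
  exact key s h1 h2
end
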